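/- Let X be a smooth projective curve, P ≠ Q rational points, and A, C divisors. Then A ∈ Δ_P(C+Q) if and only if A_P ≤ A ≤ (A−C)_P + C, where for a divisor B, B_P denotes the unique element of {B+kQ : k ∈ ℤ} ∩ Δ_Q(P) (divisor inequalities compare the multiplicity at Q, all other multiplicities being equal). -/

import Mathlib

/-- An abstract model of a smooth projective curve `X` over a field: divisors are
finitely supported `ℤ`-valued functions on the (closed) points, `l A` is the
dimension of the Riemann–Roch space `L(A)`, `K` is a canonical divisor, `g` is
the genus, and `lequiv` is linear equivalence of divisors.  The axioms record
the standard facts about Riemann–Roch spaces used in the paper. -/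
structure AlgCurve where
  Point : Type
  g : ℕ
  K : Point →₀ ℤ
  l : (Point →₀ ℤ) → ℕ
  lequiv : (Point →₀ ℤ) → (Point →₀ ℤ) → Prop
  lequiv_refl : ∀ A, lequiv A A
  lequiv_symm : ∀ {A B}, lequiv A B → lequiv B A
  lequiv_trans : ∀ {A B C}, lequiv A B → lequiv B C → lequiv A C
  lequiv_add : ∀ {A B} (C), lequiv A B → lequiv (A + C) (B + C)
  deg_lequiv : ∀ {A B}, lequiv A B → A.sum (fun _ n => n) = B.sum (fun _ n => n)
  l_lequiv : ∀ {A B}, lequiv A B → l A = l B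
  /-- `l` vanishes on divisors of negative degree. -/
  l_neg : ∀ {A}, A.sum (fun _ n => n) < 0 → l A = 0
  l_zero_divisor : l 0 = 1
  /-- removing a point decreases `l` by at most one -/
  l_step : ∀ (A) (P : Point), l A ≤ l (A - Finsupp.single P 1) + 1
  l_mono : ∀ (A) (P : Point), l (A - Finsupp.single P 1) ≤ l A
  /-- the Riemann–Roch theorem -/
  riemann_roch : ∀ A, (l A : ℤ) - l (K - A) = A.sum (fun _ n => n) + 1 - g

namespace AlgCurve

variable (X : AlgCurve)

/-- The degree of a divisor. -/
def deg (A : X.Point →₀ ℤ) : ℤ := A.sum fun _ n => n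

/-- `A ∈ Γ_P`, i.e. `L(A) ≠ L(A − P)`: the class of `A` is effective with no
base point at `P`. -/
def Gamma (P : X.Point) (A : X.Point →₀ ℤ) : Prop :=
  X.l A ≠ X.l (A - Finsupp.single P 1)

/-- `A ∈ Δ_P(C)`, i.e. `L(A) ≠ L(A−P)` and `L(A−C) = L(A−C−P)`. -/
def DeltaP (P : X.Point) (C A : X.Point →₀ ℤ) : Prop :=
  X.Gamma P A ∧ ¬ X.Gamma P (A - C)

/-- `γ_P(C)`: the minimal degree of a divisor `A` with `A ∈ Γ_P` and `A − C ∈ Γ_P`. -/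
noncomputable def gammaP (P : X.Point) (C : X.Point →₀ ℤ) : ℤ :=
  sInf {d : ℤ | ∃ A, X.Gamma P A ∧ X.Gamma P (A - C) ∧ X.deg A = d}

end AlgCurve

/-- Theorem `T:ApA`: `A ∈ Δ_P(C+Q)` iff `A_P ≤ A ≤ (A−C)_P + C`, where for a
divisor `B`, `B_P = B + k₀Q` is the unique element of `{B + kQ : k ∈ ℤ} ∩ Δ_Q(P)`,
with `k₀` characterized by `B + kQ ∈ Γ_P ↔ k₀ ≤ k`. -/
theorem delta_interval (X : AlgCurve) (P Q : X.Point) (hPQ : P ≠ Q)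
    (A C : X.Point →₀ ℤ) (kA kAC : ℤ)
    (hkA : ∀ k : ℤ, X.Gamma P (A + Finsupp.single Q k) ↔ kA ≤ k)
    (hkAC : ∀ k : ℤ, X.Gamma P (A - C + Finsupp.single Q k) ↔ kAC ≤ k) :
    X.DeltaP P (C + Finsupp.single Q 1) A ↔
      (A + Finsupp.single Q kA ≤ A ∧
        A ≤ (A - C + Finsupp.single Q kAC) + C) := by
  have h1 : X.Gamma P A ↔ kA ≤ 0 := by simpa using hkA 0
  have h2 : ¬ X.Gamma P (A - (C + Finsupp.single Q 1)) ↔ 0 ≤ kAC := by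
    have he : A - (C + Finsupp.single Q 1) = A - C + Finsupp.single Q (-1) := by
      rw [Finsupp.single_neg]; abel
    rw [he, hkAC]; omega
  have key : ∀ (B : X.Point →₀ ℤ) (k : ℤ),
      (B + Finsupp.single Q k ≤ B) ↔ k ≤ 0 := by
    intro B k
    constructor
    · intro h
      have := Finsupp.le_def.mp h Q
      simpa using this
    · intro hk
      refine Finsupp.le_def.mpr fun i => ?_
      rcases eq_or_ne i Q with rfl | hiQ
      · simp; omega
      · simp [Finsupp.single_eq_of_ne hiQ]
  have h3 : (A + Finsupp.single Q kA ≤ A) ↔ kA ≤ 0 := key A kA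
  have h4 : (A ≤ (A - C + Finsupp.single Q kAC) + C) ↔ 0 ≤ kAC := by
    have he : (A - C + Finsupp.single Q kAC) + C = A + Finsupp.single Q kAC := by
      abel
    rw [he]
    constructor
    · intro h
      have := Finsupp.le_def.mp h Q
      simp at this; omega
    · intro hk
      refine Finsupp.le_def.mpr fun i => ?_
      rcases eq_or_ne i Q with rfl | hiQ
      · simp; omega
      · simp [Finsupp.single_eq_of_ne hiQ]
  unfold AlgCurve.DeltaP
  rw [h1, h2, h3, h4]
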